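/- Let α > 1 be an irrational real number. Then as t → 0⁺, E_α(t) = E_α(0) + o(1), where E_α(0) = −∑_{ℓ≥1} ( {αℓ}/(αℓ) + log(1 − {αℓ}/(αℓ)) ). -/

import Mathlib

open Filter Topology Real Asymptotics MeasureTheory intervalIntegral

/-- `K(u) = u²/sinh²(u)` for `u ≠ 0`, with `K(0) = 1`. -/
noncomputable def KKer (u : ℝ) : ℝ :=
  if u = 0 then 1 else u ^ 2 / Real.sinh u ^ 2

lemma KKer_zero : KKer 0 = 1 := by simp [KKer]

lemma KKer_cont : Continuous KKer := by
  rw [continuous_iff_continuousAt]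
  intro x
  rcases eq_or_ne x 0 with rfl | hx
  · have h1 : Tendsto (fun u : ℝ => Real.sinh u / u) (𝓝[≠] 0) (𝓝 1) := by
      have := (Real.hasDerivAt_sinh 0)
      rw [hasDerivAt_iff_tendsto_slope] at this
      simpa [slope_fun_def_field, Real.cosh_zero, Real.sinh_zero] using this
    have h2 : Tendsto (fun u : ℝ => (u / Real.sinh u) ^ 2) (𝓝[≠] 0) (𝓝 1) := by
      have := (h1.inv₀ one_ne_zero).pow 2
      simpa [inv_div] using this
    have h3 : Tendsto KKer (𝓝[≠] 0) (𝓝 1) := by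
      refine h2.congr' ?_
      filter_upwards [self_mem_nhdsWithin] with u hu
      simp only [Set.mem_compl_iff, Set.mem_singleton_iff] at hu
      rw [KKer, if_neg hu, div_pow]
    unfold ContinuousAt
    rw [KKer_zero, ← nhdsNE_sup_pure 0, tendsto_sup]
    exact ⟨h3, by rw [tendsto_pure_left]; intro s hs; simpa [KKer_zero] using mem_of_mem_nhds hs⟩
  · have h : ∀ᶠ y in 𝓝 x, y ^ 2 / Real.sinh y ^ 2 = KKer y := by
      filter_upwards [isOpen_compl_singleton.mem_nhds hx] with y hy
      simp only [Set.mem_compl_iff, Set.mem_singleton_iff] at hy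
      rw [KKer, if_neg hy]
    refine ContinuousAt.congr ?_ h
    exact (continuousAt_pow x 2).div ((Real.continuous_sinh.pow 2).continuousAt)
      (pow_ne_zero 2 (Real.sinh_ne_zero.mpr hx))

lemma KKer_nonneg (x : ℝ) : 0 ≤ KKer x := by
  unfold KKer; split
  · norm_num
  · positivity

lemma KKer_le_one (x : ℝ) : KKer x ≤ 1 := by
  unfold KKer; split
  · exact le_refl 1
  · rename_i hx
    have hs : Real.sinh x ≠ 0 := Real.sinh_ne_zero.mpr hx
    rw [div_le_one (by positivity)]
    have h1 : |x| ≤ |Real.sinh x| := by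
      rw [Real.abs_sinh]
      exact le_of_lt (Real.self_lt_sinh_iff.mpr (abs_pos.mpr hx))
    calc x ^ 2 = |x| ^ 2 := (sq_abs x).symm
    _ ≤ |Real.sinh x| ^ 2 := pow_le_pow_left₀ (abs_nonneg x) h1 2
    _ = Real.sinh x ^ 2 := sq_abs _

lemma cont_integrand (b t : ℝ) {s : Set ℝ} (hs : ∀ v ∈ s, b - v ≠ 0) :
    ContinuousOn (fun v => KKer ((b - v) * t / 2) / (b - v) ^ 2) s := by
  apply ContinuousOn.div
  · exact (KKer_cont.comp (by continuity)).continuousOn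
  · fun_prop
  · intro v hv; exact pow_ne_zero 2 (hs v hv)

lemma norm_integrand_le (b v t : ℝ) (hb1 : 0 < b - 1) (h : b - 1 ≤ b - v) :
    ‖KKer ((b - v) * t / 2) / (b - v) ^ 2‖ ≤ ((b - 1) ^ 2)⁻¹ := by
  rw [Real.norm_eq_abs, abs_of_nonneg (div_nonneg (KKer_nonneg _) (sq_nonneg _)), ← one_div]
  exact div_le_div₀ zero_le_one (KKer_le_one _) (pow_pos hb1 2) (pow_le_pow_left₀ hb1.le h 2)

lemma inner_bnd (b c t u : ℝ) (hb : 1 < b) (hc0 : 0 ≤ c) (hc1 : c < 1)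
    (hu : u ∈ Set.uIoc 0 c) :
    ‖∫ v in (0:ℝ)..u, KKer ((b - v) * t / 2) / (b - v) ^ 2‖ ≤ ((b - 1) ^ 2)⁻¹ := by
  rw [Set.uIoc_of_le hc0] at hu
  have h1 : ∀ v ∈ Set.uIoc (0:ℝ) u, ‖KKer ((b - v) * t / 2) / (b - v) ^ 2‖ ≤ ((b - 1) ^ 2)⁻¹ := by
    intro v hv
    rw [Set.uIoc_of_le hu.1.le] at hv
    exact norm_integrand_le b v t (by linarith) (by linarith [hv.2, hu.2])
  calc ‖∫ v in (0:ℝ)..u, KKer ((b - v) * t / 2) / (b - v) ^ 2‖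
      ≤ ((b - 1) ^ 2)⁻¹ * |u - 0| := intervalIntegral.norm_integral_le_of_norm_le_const h1
    _ ≤ ((b - 1) ^ 2)⁻¹ * 1 := by
        apply mul_le_mul_of_nonneg_left _ (by positivity)
        rw [sub_zero, abs_of_nonneg hu.1.le]; linarith [hu.2]
    _ = ((b - 1) ^ 2)⁻¹ := mul_one _

lemma bnd (b c t : ℝ) (hb : 1 < b) (hc0 : 0 ≤ c) (hc1 : c < 1) :
    ‖∫ u in (0:ℝ)..c, ∫ v in (0:ℝ)..u, KKer ((b - v) * t / 2) / (b - v) ^ 2‖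
      ≤ ((b - 1) ^ 2)⁻¹ := by
  calc ‖∫ u in (0:ℝ)..c, ∫ v in (0:ℝ)..u, KKer ((b - v) * t / 2) / (b - v) ^ 2‖
      ≤ ((b - 1) ^ 2)⁻¹ * |c - 0| :=
        intervalIntegral.norm_integral_le_of_norm_le_const
          (fun u hu => inner_bnd b c t u hb hc0 hc1 hu)
    _ ≤ ((b - 1) ^ 2)⁻¹ * 1 := by
        apply mul_le_mul_of_nonneg_left _ (by positivity)
        rw [sub_zero, abs_of_nonneg hc0]; linarith
    _ = ((b - 1) ^ 2)⁻¹ := mul_one _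

lemma meas_inner (b c t u : ℝ) (hb : 1 < b) (hc0 : 0 ≤ c) (hc1 : c < 1)
    (hu : u ∈ Set.uIcc 0 c) :
    AEStronglyMeasurable (fun v => KKer ((b - v) * t / 2) / (b - v) ^ 2)
      (volume.restrict (Set.uIoc 0 u)) := by
  rw [Set.uIcc_of_le hc0] at hu
  have h : ContinuousOn (fun v => KKer ((b - v) * t / 2) / (b - v) ^ 2) (Set.uIcc 0 u) := by
    apply cont_integrand
    intro v hv
    rw [Set.uIcc_of_le hu.1] at hv
    have : v ≤ u := hv.2
    nlinarith [hu.2]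
  exact (h.mono Set.uIoc_subset_uIcc).aestronglyMeasurable measurableSet_uIoc

lemma tends (b c : ℝ) (hb : 1 < b) (hc0 : 0 ≤ c) (hc1 : c < 1) :
    Tendsto (fun t => ∫ u in (0:ℝ)..c, ∫ v in (0:ℝ)..u, KKer ((b - v) * t / 2) / (b - v) ^ 2)
      (𝓝 0)
      (𝓝 (∫ u in (0:ℝ)..c, ∫ v in (0:ℝ)..u, KKer ((b - v) * 0 / 2) / (b - v) ^ 2)) := by
  apply intervalIntegral.tendsto_integral_filter_of_dominated_convergence
    (bound := fun _ => ((b - 1) ^ 2)⁻¹)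
  · -- measurability of u ↦ inner integral
    apply Filter.Eventually.of_forall
    intro t
    have hcont : ContinuousOn (fun v => KKer ((b - v) * t / 2) / (b - v) ^ 2)
        (Set.uIcc 0 c) := by
      apply cont_integrand
      intro v hv
      rw [Set.uIcc_of_le hc0] at hv
      nlinarith [hv.2]
    have hint : IntegrableOn (fun v => KKer ((b - v) * t / 2) / (b - v) ^ 2)
        (Set.uIcc 0 c) volume := hcont.integrableOn_compact isCompact_uIcc
    exact ((intervalIntegral.continuousOn_primitive_interval hint).mono
      Set.uIoc_subset_uIcc).aestronglyMeasurable measurableSet_uIoc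
  · apply Filter.Eventually.of_forall
    intro t
    apply ae_of_all
    intro u hu
    exact inner_bnd b c t u hb hc0 hc1 hu
  · exact intervalIntegrable_const
  · apply ae_of_all
    intro u hu
    have hu' : u ∈ Set.uIcc 0 c := Set.uIoc_subset_uIcc hu
    apply intervalIntegral.tendsto_integral_filter_of_dominated_convergence
      (bound := fun _ => ((b - 1) ^ 2)⁻¹)
    · exact Filter.Eventually.of_forall fun t => meas_inner b c t u hb hc0 hc1 hu'
    · apply Filter.Eventually.of_forall
      intro t
      apply ae_of_all
      intro v hv
      rw [Set.uIoc_of_le hc0] at hu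
      rw [Set.uIoc_of_le hu.1.le] at hv
      exact norm_integrand_le b v t (by linarith) (by linarith [hv.2, hu.2])
    · exact intervalIntegrable_const
    · apply ae_of_all
      intro v _
      exact ((KKer_cont.comp (by continuity)).div_const _).tendsto 0

lemma val0 (b c : ℝ) (hb : 1 < b) (hc0 : 0 ≤ c) (hc1 : c < 1) :
    (∫ u in (0:ℝ)..c, ∫ v in (0:ℝ)..u, KKer ((b - v) * 0 / 2) / (b - v) ^ 2)
      = -(c / b + Real.log (1 - c / b)) := by
  have hb0 : 0 < b := by linarith
  simp only [mul_zero, zero_div, KKer_zero]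
  have inner : Set.EqOn (fun u => ∫ v in (0:ℝ)..u, 1 / (b - v) ^ 2)
      (fun u => (b - u)⁻¹ - b⁻¹) (Set.uIcc 0 c) := by
    intro u hu
    rw [Set.uIcc_of_le hc0] at hu
    have key := intervalIntegral.integral_eq_sub_of_hasDerivAt
      (f := fun v => (b - v)⁻¹) (f' := fun v => 1 / (b - v) ^ 2) (a := (0:ℝ)) (b := u)
      (fun v hv => by
        rw [Set.uIcc_of_le hu.1] at hv
        have hbv : b - v ≠ 0 := by nlinarith [hv.2, hu.2]
        have hd : HasDerivAt (fun v : ℝ => b - v) (-1) v := (hasDerivAt_id v).const_sub b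
        have := hd.inv hbv
        convert this using 1
        · rfl
        · rfl
        · ring)
      (by
        apply ContinuousOn.intervalIntegrable
        apply ContinuousOn.div continuousOn_const
        · fun_prop
        · intro v hv
          rw [Set.uIcc_of_le hu.1] at hv
          have : b - v ≠ 0 := by nlinarith [hv.2, hu.2]
          exact pow_ne_zero 2 this)
    simpa using key
  rw [intervalIntegral.integral_congr inner]
  have key := intervalIntegral.integral_eq_sub_of_hasDerivAt
    (f := fun u => -Real.log (b - u) - u / b) (f' := fun u => (b - u)⁻¹ - b⁻¹)
    (a := (0:ℝ)) (b := c)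
    (fun u hu => by
      rw [Set.uIcc_of_le hc0] at hu
      have hbu : b - u ≠ 0 := by nlinarith [hu.2]
      have hd : HasDerivAt (fun u : ℝ => b - u) (-1) u := (hasDerivAt_id u).const_sub b
      have hlog := (hd.log hbu).neg
      have hdiv : HasDerivAt (fun u : ℝ => u / b) b⁻¹ u := by
        simpa using (hasDerivAt_id u).div_const b
      have := hlog.sub hdiv
      convert this using 1
      · rfl
      · ring)
    (by
      apply ContinuousOn.intervalIntegrable
      apply ContinuousOn.sub
      · apply ContinuousOn.inv₀
        · fun_prop
        · intro u hu
          rw [Set.uIcc_of_le hc0] at hu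
          nlinarith [hu.2]
      · exact continuousOn_const)
  rw [key]
  have hbc : 0 < b - c := by linarith
  have h1 : (1:ℝ) - c / b = (b - c) / b := by field_simp
  rw [h1, Real.log_div hbc.ne' hb0.ne']
  simp [Real.log_zero, sub_zero]
  ring

/-- `E_α(t) = ∑_{ℓ ≥ 1} ∫₀^{{αℓ}} ∫₀^u K((αℓ - v)t/2)/(αℓ - v)² dv du`. -/
noncomputable def EBeatty (α : ℝ) (t : ℝ) : ℝ :=
  ∑' ℓ : ℕ, ∫ u in (0 : ℝ)..Int.fract (α * (ℓ + 1)),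
    ∫ v in (0 : ℝ)..u, KKer ((α * (ℓ + 1) - v) * t / 2) / (α * (ℓ + 1) - v) ^ 2

theorem stmt15 (α : ℝ) (hα : 1 < α) (hirr : Irrational α) :
    EBeatty α 0 = -∑' ℓ : ℕ, (Int.fract (α * (ℓ + 1)) / (α * (ℓ + 1))
        + Real.log (1 - Int.fract (α * (ℓ + 1)) / (α * (ℓ + 1)))) ∧
    Tendsto (EBeatty α) (𝓝[>] (0 : ℝ)) (𝓝 (EBeatty α 0)) := by
  have hb : ∀ ℓ : ℕ, 1 < α * (ℓ + 1 : ℝ) := by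
    intro ℓ
    have h1 : (1:ℝ) ≤ (ℓ : ℝ) + 1 := by
      have := Nat.cast_nonneg (α := ℝ) ℓ; linarith
    nlinarith
  have hc0 : ∀ ℓ : ℕ, 0 ≤ Int.fract (α * (ℓ + 1 : ℝ)) := fun ℓ => Int.fract_nonneg _
  have hc1 : ∀ ℓ : ℕ, Int.fract (α * (ℓ + 1 : ℝ)) < 1 := fun ℓ => Int.fract_lt_one _
  constructor
  · rw [EBeatty, ← tsum_neg]
    exact tsum_congr fun ℓ => val0 _ _ (hb ℓ) (hc0 ℓ) (hc1 ℓ)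
  · have key := tendsto_tsum_of_dominated_convergence (𝓕 := 𝓝[>] (0:ℝ))
      (f := fun t (ℓ : ℕ) => ∫ u in (0 : ℝ)..Int.fract (α * (ℓ + 1)),
        ∫ v in (0 : ℝ)..u, KKer ((α * (ℓ + 1) - v) * t / 2) / (α * (ℓ + 1) - v) ^ 2)
      (g := fun ℓ : ℕ => ∫ u in (0 : ℝ)..Int.fract (α * (ℓ + 1)),
        ∫ v in (0 : ℝ)..u, KKer ((α * (ℓ + 1) - v) * 0 / 2) / (α * (ℓ + 1) - v) ^ 2)
      (bound := fun ℓ : ℕ => ((α * (ℓ + 1 : ℝ) - 1) ^ 2)⁻¹)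
      ?_ ?_ ?_
    · exact key
    · -- summability of the bound
      have hbase : Summable (fun n : ℕ => (((n : ℝ) + 1) ^ 2)⁻¹) := by
        have h := Real.summable_one_div_nat_pow.mpr (le_refl 2)
        have h2 := (summable_nat_add_iff 1).mpr h
        refine h2.congr fun n => ?_
        push_cast
        rw [one_div]
      refine Summable.of_nonneg_of_le (fun ℓ => by positivity) (fun ℓ => ?_)
        (hbase.mul_left (((α - 1) ^ 2)⁻¹))
      have h1 : (0:ℝ) < (α - 1) * ((ℓ:ℝ) + 1) := by
        have := Nat.cast_nonneg (α := ℝ) ℓ; nlinarith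
      have h2 : (α - 1) * ((ℓ:ℝ) + 1) ≤ α * ((ℓ:ℝ) + 1) - 1 := by nlinarith [Nat.cast_nonneg (α := ℝ) ℓ]
      rw [← mul_inv, ← mul_pow]
      exact inv_anti₀ (by positivity) (pow_le_pow_left₀ h1.le h2 2)
    · intro ℓ
      exact (tends _ _ (hb ℓ) (hc0 ℓ) (hc1 ℓ)).mono_left nhdsWithin_le_nhds
    · exact Filter.Eventually.of_forall fun t ℓ => bnd _ _ t (hb ℓ) (hc0 ℓ) (hc1 ℓ)
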